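/- In the generalized Gaussian spin model, if the limiting free energy p(γ) = lim_N E[ψ_N(γ)] exists for all γ in a neighborhood of γ₀ and is differentiable at γ₀, and |A_N| = O(N), then E|⟨H⟩ − ν(H)| → 0 as N → ∞, where H = (1/N) Σ_{α ∈ A_N} g_α f_α and ν(H) = E⟨H⟩. -/

import Mathlib

set_option linter.unusedSectionVars false
open MeasureTheory ProbabilityTheory Filter Topology

lemma gg_int_sq : Integrable (fun x : ℝ => x ^ 2) (gaussianReal 0 1) := by
  rw [gaussianReal_of_var_ne_zero 0 one_ne_zero,
    integrable_withDensity_iff (measurable_gaussianPDF 0 1)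
      (Filter.Eventually.of_forall fun x => ENNReal.ofReal_lt_top)]
  have h : ∀ x : ℝ, x ^ 2 * (gaussianPDF 0 1 x).toReal
      = ((Real.sqrt (2 * Real.pi))⁻¹) * (x ^ 2 * Real.exp (-(1/2) * x ^ 2)) := by
    intro x
    rw [gaussianPDF, ENNReal.toReal_ofReal (gaussianPDFReal_nonneg 0 1 x),
      gaussianPDFReal]
    push_cast
    ring_nf
  have h2 : Integrable (fun x : ℝ => x ^ 2 * Real.exp (-(1/2) * x ^ 2)) := by
    have h3 := integrable_rpow_mul_exp_neg_mul_sq (b := 1/2) (by norm_num)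
      (s := ((2:ℕ):ℝ)) (by norm_num)
    have h4 : ∀ x : ℝ, x ^ ((2:ℕ):ℝ) * Real.exp (-(1/2) * x ^ 2)
        = x ^ 2 * Real.exp (-(1/2) * x ^ 2) := by
      intro x; rw [Real.rpow_natCast]
    exact h3.congr (Filter.Eventually.of_forall h4)
  exact ((h2.const_mul ((Real.sqrt (2 * Real.pi))⁻¹)).congr
    (Filter.Eventually.of_forall fun x => (h x).symm))

lemma gg_int_abs : Integrable (fun x : ℝ => |x|) (gaussianReal 0 1) := by
  have : Integrable (fun x : ℝ => 1 + x ^ 2) (gaussianReal 0 1) :=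
    (integrable_const 1).add gg_int_sq
  refine this.mono' (measurable_id.abs).aestronglyMeasurable ?_
  filter_upwards with x
  rw [Real.norm_eq_abs, abs_abs]
  nlinarith [sq_nonneg (|x| - 1), abs_nonneg x, sq_abs x]

noncomputable def c2 : ℝ := ∫ x, x ^ 2 ∂(gaussianReal 0 1)

lemma c2_nonneg : 0 ≤ c2 := integral_nonneg (fun x => sq_nonneg x)

lemma integral_comp_mp {α β : Type*} [MeasurableSpace α] [MeasurableSpace β] {μα : Measure α}
    {μβ : Measure β} {T : α → β} (hT : MeasurePreserving T μα μβ) {h : β → ℝ}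
    (hh : AEStronglyMeasurable h μβ) : ∫ a, h (T a) ∂μα = ∫ b, h b ∂μβ := by
  rw [← hT.map_eq] at hh ⊢
  exact (integral_map hT.measurable.aemeasurable hh).symm

lemma mp_eval_pi {ι : Type*} [Fintype ι] {π : ι → Type*} [∀ i, MeasurableSpace (π i)]
    (μ : ∀ i, Measure (π i)) [∀ i, IsProbabilityMeasure (μ i)] (i : ι) :
    MeasurePreserving (Function.eval i) (Measure.pi μ) (μ i) := by
  classical
  refine ⟨measurable_pi_apply i, ?_⟩
  ext s hs
  rw [Measure.map_apply (measurable_pi_apply i) hs, Set.eval_preimage, Measure.pi_pi]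
  rw [Finset.prod_eq_single i]
  · simp
  · intro j _ hj; simp [Function.update_of_ne hj]
  · simp

lemma map_reindex_pi {ι ι' : Type*} [Fintype ι] [Fintype ι'] {π : Type*} [MeasurableSpace π]
    (μ0 : Measure π) [IsProbabilityMeasure μ0] (c : ι' → ι) (hc : Function.Injective c) :
    MeasurePreserving (fun (p : ι → π) (i : ι') => p (c i))
      (Measure.pi fun _ => μ0) (Measure.pi fun _ => μ0) := by
  classical
  have hm : Measurable (fun (p : ι → π) (i : ι') => p (c i)) :=
    measurable_pi_lambda _ fun i => measurable_pi_apply (c i)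
  refine ⟨hm, ?_⟩
  refine (Measure.pi_eq fun s hs => ?_).symm
  rw [Measure.map_apply hm (MeasurableSet.univ_pi hs)]
  have hpre : (fun (p : ι → π) (i : ι') => p (c i)) ⁻¹' (Set.univ.pi s)
      = Set.univ.pi (fun j : ι => if h : ∃ i, c i = j then s h.choose else Set.univ) := by
    ext p
    simp only [Set.mem_preimage, Set.mem_univ_pi]
    constructor
    · intro hp j
      by_cases h : ∃ i, c i = j
      · simp only [dif_pos h]
        have := hp h.choose
        rwa [h.choose_spec] at this
      · simp [dif_neg h]
    · intro hp i
      have := hp (c i)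
      have hex : ∃ i', c i' = c i := ⟨i, rfl⟩
      rw [dif_pos hex] at this
      have : p (c i) ∈ s hex.choose := this
      have heq : hex.choose = i := hc hex.choose_spec
      rwa [heq] at this
  rw [hpre, Measure.pi_pi]
  calc (∏ j : ι, μ0 (if h : ∃ i, c i = j then s h.choose else Set.univ))
      = ∏ j ∈ Finset.univ.image c, μ0 (if h : ∃ i, c i = j then s h.choose else Set.univ) := by
        refine (Finset.prod_subset (Finset.subset_univ _) ?_).symm
        intro j _ hj
        have hne : ¬ ∃ i, c i = j := by simpa [Finset.mem_image] using hj
        simp [dif_neg hne]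
    _ = ∏ i : ι', μ0 (if h : ∃ i', c i' = c i then s h.choose else Set.univ) :=
        Finset.prod_image (fun a _ b _ h => hc h)
    _ = ∏ i : ι', μ0 (s i) := by
        apply Finset.prod_congr rfl
        intro i _
        have hex : ∃ i', c i' = c i := ⟨i, rfl⟩
        rw [dif_pos hex]
        exact congrArg μ0 (congrArg s (hc hex.choose_spec))

lemma law_pi {Ω : Type*} [MeasureSpace Ω] [IsProbabilityMeasure (ℙ : Measure Ω)]
    {ι : Type*} [Fintype ι] (g : ι → Ω → ℝ) (hgm : ∀ i, Measurable (g i))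
    (hglaw : ∀ i, Measure.map (g i) ℙ = gaussianReal 0 1)
    (hgindep : iIndepFun (β := fun _ : ι => ℝ) g ℙ) :
    MeasurePreserving (fun ω (i : ι) => g i ω) ℙ (Measure.pi fun _ => gaussianReal 0 1) := by
  classical
  have hm : Measurable (fun ω (i : ι) => g i ω) := measurable_pi_lambda _ hgm
  refine ⟨hm, ?_⟩
  refine (Measure.pi_eq fun s hs => ?_).symm
  rw [Measure.map_apply hm (MeasurableSet.univ_pi hs)]
  have hpre : (fun ω (i : ι) => g i ω) ⁻¹' (Set.univ.pi s) = ⋂ i, g i ⁻¹' s i := by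
    ext ω; simp [Set.mem_pi]
  rw [hpre, hgindep.meas_iInter (fun i => ⟨s i, hs i, rfl⟩)]
  apply Finset.prod_congr rfl
  intro i _
  rw [← hglaw i, Measure.map_apply (hgm i) (hs i)]

section DetCalc

variable {τ : Type*} [Fintype τ] [Nonempty τ] (κ : τ → ℝ) (S : τ → ℝ)

/-- partition function -/
noncomputable def Zf (γ : ℝ) : ℝ := ∑ σ, κ σ * Real.exp (γ * S σ)

/-- Gibbs average of S -/
noncomputable def Df (γ : ℝ) : ℝ :=
  (∑ σ, κ σ * S σ * Real.exp (γ * S σ)) / Zf κ S γ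

variable (hκ0 : ∀ σ, 0 ≤ κ σ) (hκ1 : ∑ σ, κ σ = 1)
include hκ0 hκ1

lemma Zf_pos (γ : ℝ) : 0 < Zf κ S γ := by
  obtain ⟨σ0, hσ0⟩ : ∃ σ, 0 < κ σ := by
    by_contra h
    push_neg at h
    have : ∑ σ, κ σ = 0 :=
      Finset.sum_eq_zero fun σ _ => le_antisymm (h σ) (hκ0 σ)
    rw [hκ1] at this; norm_num at this
  apply Finset.sum_pos' (fun σ _ => mul_nonneg (hκ0 σ) (Real.exp_pos _).le)
  exact ⟨σ0, Finset.mem_univ _, mul_pos hσ0 (Real.exp_pos _)⟩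

lemma hasDerivAt_Zf (γ : ℝ) :
    HasDerivAt (Zf κ S) (∑ σ, κ σ * S σ * Real.exp (γ * S σ)) γ := by
  have : ∀ σ ∈ Finset.univ (α := τ), HasDerivAt (fun γ => κ σ * Real.exp (γ * S σ))
      (κ σ * S σ * Real.exp (γ * S σ)) γ := by
    intro σ _
    have h1 : HasDerivAt (fun γ : ℝ => γ * S σ) (S σ) γ := by
      simpa using (hasDerivAt_id γ).mul_const (S σ)
    have h2 := h1.exp
    have h3 := h2.const_mul (κ σ)
    refine h3.congr_deriv ?_
    ring
  exact HasDerivAt.fun_sum this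

lemma hasDerivAt_logZf (γ : ℝ) :
    HasDerivAt (fun γ => Real.log (Zf κ S γ)) (Df κ S γ) γ :=
  (hasDerivAt_Zf κ S hκ0 hκ1 γ).log (Zf_pos κ S hκ0 hκ1 γ).ne'

lemma Df_mono : Monotone (Df κ S) := by
  have hD : ∀ γ, HasDerivAt (Df κ S)
      (((∑ σ, κ σ * S σ ^ 2 * Real.exp (γ * S σ)) * Zf κ S γ
        - (∑ σ, κ σ * S σ * Real.exp (γ * S σ)) ^ 2) / (Zf κ S γ) ^ 2) γ := by
    intro γ
    have hnum : HasDerivAt (fun γ => ∑ σ, κ σ * S σ * Real.exp (γ * S σ))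
        (∑ σ, κ σ * S σ ^ 2 * Real.exp (γ * S σ)) γ := by
      have : ∀ σ ∈ Finset.univ (α := τ), HasDerivAt (fun γ => κ σ * S σ * Real.exp (γ * S σ))
          (κ σ * S σ ^ 2 * Real.exp (γ * S σ)) γ := by
        intro σ _
        have h1 : HasDerivAt (fun γ : ℝ => γ * S σ) (S σ) γ := by
          simpa using (hasDerivAt_id γ).mul_const (S σ)
        have h3 := h1.exp.const_mul (κ σ * S σ)
        refine h3.congr_deriv ?_
        ring
      exact HasDerivAt.fun_sum this
    have := hnum.div (hasDerivAt_Zf κ S hκ0 hκ1 γ) (Zf_pos κ S hκ0 hκ1 γ).ne'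
    refine this.congr_deriv ?_
    unfold Zf
    ring
  apply monotone_of_deriv_nonneg
  · exact fun γ => (hD γ).differentiableAt
  · intro γ
    rw [(hD γ).deriv]
    apply div_nonneg _ (sq_nonneg _)
    rw [sub_nonneg]
    have hcs := Finset.sum_mul_sq_le_sq_mul_sq Finset.univ
      (fun σ => Real.sqrt (κ σ * Real.exp (γ * S σ)))
      (fun σ => S σ * Real.sqrt (κ σ * Real.exp (γ * S σ)))
    have he : ∀ σ, 0 ≤ κ σ * Real.exp (γ * S σ) :=
      fun σ => mul_nonneg (hκ0 σ) (Real.exp_pos _).le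
    calc (∑ σ, κ σ * S σ * Real.exp (γ * S σ)) ^ 2
        = (∑ σ, Real.sqrt (κ σ * Real.exp (γ * S σ))
            * (S σ * Real.sqrt (κ σ * Real.exp (γ * S σ)))) ^ 2 := by
          congr 1
          apply Finset.sum_congr rfl
          intro σ _
          rw [show Real.sqrt (κ σ * Real.exp (γ * S σ))
              * (S σ * Real.sqrt (κ σ * Real.exp (γ * S σ)))
              = S σ * (Real.sqrt (κ σ * Real.exp (γ * S σ))
                * Real.sqrt (κ σ * Real.exp (γ * S σ))) by ring,
            Real.mul_self_sqrt (he σ)]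
          ring
      _ ≤ (∑ σ, Real.sqrt (κ σ * Real.exp (γ * S σ)) ^ 2)
            * ∑ σ, (S σ * Real.sqrt (κ σ * Real.exp (γ * S σ))) ^ 2 := hcs
      _ = Zf κ S γ * ∑ σ, κ σ * S σ ^ 2 * Real.exp (γ * S σ) := by
          congr 1
          · apply Finset.sum_congr rfl
            intro σ _
            rw [Real.sq_sqrt (he σ)]
          · apply Finset.sum_congr rfl
            intro σ _
            rw [mul_pow, Real.sq_sqrt (he σ)]
            ring
      _ = (∑ σ, κ σ * S σ ^ 2 * Real.exp (γ * S σ)) * Zf κ S γ := by ring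

lemma slope_upper {γ₀ δ : ℝ} (hδ : 0 < δ) :
    Df κ S γ₀ ≤ (Real.log (Zf κ S (γ₀ + δ)) - Real.log (Zf κ S γ₀)) / δ := by
  obtain ⟨c, hc, hceq⟩ := exists_hasDerivAt_eq_slope (fun γ => Real.log (Zf κ S γ)) (Df κ S)
    (by linarith : γ₀ < γ₀ + δ)
    (fun γ _ => (hasDerivAt_logZf κ S hκ0 hκ1 γ).continuousAt.continuousWithinAt)
    (fun γ _ => hasDerivAt_logZf κ S hκ0 hκ1 γ)
  have h2 : (Real.log (Zf κ S (γ₀ + δ)) - Real.log (Zf κ S γ₀)) / δ = Df κ S c := by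
    rw [hceq]; congr 1; ring
  rw [h2]
  exact Df_mono κ S hκ0 hκ1 hc.1.le

lemma slope_lower {γ₀ δ : ℝ} (hδ : 0 < δ) :
    (Real.log (Zf κ S γ₀) - Real.log (Zf κ S (γ₀ - δ))) / δ ≤ Df κ S γ₀ := by
  obtain ⟨c, hc, hceq⟩ := exists_hasDerivAt_eq_slope (fun γ => Real.log (Zf κ S γ)) (Df κ S)
    (by linarith : γ₀ - δ < γ₀)
    (fun γ _ => (hasDerivAt_logZf κ S hκ0 hκ1 γ).continuousAt.continuousWithinAt)
    (fun γ _ => hasDerivAt_logZf κ S hκ0 hκ1 γ)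
  have h2 : (Real.log (Zf κ S γ₀) - Real.log (Zf κ S (γ₀ - δ))) / δ = Df κ S c := by
    rw [hceq]; congr 1; ring
  rw [h2]
  exact Df_mono κ S hκ0 hκ1 hc.2.le

lemma Df_abs_le {M : ℝ} (hM : ∀ σ, |S σ| ≤ M) (γ : ℝ) : |Df κ S γ| ≤ M := by
  have hZ := Zf_pos κ S hκ0 hκ1 γ
  have hM0 : 0 ≤ M := le_trans (abs_nonneg _) (hM (Classical.arbitrary τ))
  rw [Df, abs_div, abs_of_pos hZ, div_le_iff₀ hZ]
  calc |∑ σ, κ σ * S σ * Real.exp (γ * S σ)|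
      ≤ ∑ σ, |κ σ * S σ * Real.exp (γ * S σ)| := Finset.abs_sum_le_sum_abs _ _
    _ ≤ ∑ σ, M * (κ σ * Real.exp (γ * S σ)) := by
        apply Finset.sum_le_sum
        intro σ _
        rw [abs_mul, abs_mul, abs_of_nonneg (hκ0 σ), abs_of_pos (Real.exp_pos _)]
        calc κ σ * |S σ| * Real.exp (γ * S σ)
            ≤ κ σ * M * Real.exp (γ * S σ) := by
              apply mul_le_mul_of_nonneg_right _ (Real.exp_pos _).le
              exact mul_le_mul_of_nonneg_left (hM σ) (hκ0 σ)
          _ = M * (κ σ * Real.exp (γ * S σ)) := by ring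
    _ = M * Zf κ S γ := by rw [← Finset.mul_sum]; rfl

lemma logZf_abs_le {M : ℝ} (hM : ∀ σ, |S σ| ≤ M) (γ : ℝ) :
    |Real.log (Zf κ S γ)| ≤ |γ| * M := by
  have hZ := Zf_pos κ S hκ0 hκ1 γ
  have hb : ∀ σ, γ * S σ ≤ |γ| * M := by
    intro σ
    calc γ * S σ ≤ |γ * S σ| := le_abs_self _
      _ = |γ| * |S σ| := abs_mul _ _
      _ ≤ |γ| * M := mul_le_mul_of_nonneg_left (hM σ) (abs_nonneg _)
  have hlb : ∀ σ, -(|γ| * M) ≤ γ * S σ := by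
    intro σ
    rw [neg_le]
    calc -(γ * S σ) ≤ |γ * S σ| := neg_le_abs _
      _ = |γ| * |S σ| := abs_mul _ _
      _ ≤ |γ| * M := mul_le_mul_of_nonneg_left (hM σ) (abs_nonneg _)
  rw [abs_le]
  constructor
  · rw [← Real.log_exp (-(|γ| * M))]
    apply Real.log_le_log (Real.exp_pos _)
    calc Real.exp (-(|γ| * M)) = ∑ σ, κ σ * Real.exp (-(|γ| * M)) := by
          rw [← Finset.sum_mul, hκ1, one_mul]
      _ ≤ Zf κ S γ := by
          apply Finset.sum_le_sum
          intro σ _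
          exact mul_le_mul_of_nonneg_left (Real.exp_le_exp.2 (hlb σ)) (hκ0 σ)
  · rw [← Real.log_exp (|γ| * M)]
    apply Real.log_le_log hZ
    calc Zf κ S γ ≤ ∑ σ, κ σ * Real.exp (|γ| * M) := by
          apply Finset.sum_le_sum
          intro σ _
          exact mul_le_mul_of_nonneg_left (Real.exp_le_exp.2 (hb σ)) (hκ0 σ)
      _ = Real.exp (|γ| * M) := by rw [← Finset.sum_mul, hκ1, one_mul]

end DetCalc

lemma logZf_lip_side {τ α : Type*} [Fintype τ] [Nonempty τ] [Fintype α] [DecidableEq α]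
    (κ : τ → ℝ) (hκ0 : ∀ σ, 0 ≤ κ σ) (hκ1 : ∑ σ, κ σ = 1) (f : α → τ → ℝ)
    (hf : ∀ a σ, |f a σ| ≤ 1) (γ : ℝ) (k : α) (x y : α → ℝ) (hxy : ∀ j, j ≠ k → x j = y j) :
    Real.log (Zf κ (fun σ => ∑ a, x a * f a σ) γ)
      ≤ Real.log (Zf κ (fun σ => ∑ a, y a * f a σ) γ) + |γ| * |x k - y k| := by
  have hdiff : ∀ σ, (∑ a, x a * f a σ) - (∑ a, y a * f a σ) = (x k - y k) * f k σ := by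
    intro σ
    rw [← Finset.sum_sub_distrib]
    rw [Finset.sum_eq_single k]
    · ring
    · intro j _ hj; rw [hxy j hj]; ring
    · intro h; exact absurd (Finset.mem_univ k) h
  have hZle : Zf κ (fun σ => ∑ a, x a * f a σ) γ
      ≤ Real.exp (|γ| * |x k - y k|) * Zf κ (fun σ => ∑ a, y a * f a σ) γ := by
    rw [Zf, Zf, Finset.mul_sum]
    apply Finset.sum_le_sum
    intro σ _
    have h1 : γ * (∑ a, x a * f a σ)
        = γ * (∑ a, y a * f a σ) + γ * ((x k - y k) * f k σ) := by
      rw [← mul_add]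
      congr 1
      rw [← hdiff σ]; ring
    rw [h1, Real.exp_add]
    have h2 : Real.exp (γ * ((x k - y k) * f k σ)) ≤ Real.exp (|γ| * |x k - y k|) := by
      apply Real.exp_le_exp.2
      calc γ * ((x k - y k) * f k σ) ≤ |γ * ((x k - y k) * f k σ)| := le_abs_self _
        _ = |γ| * |x k - y k| * |f k σ| := by rw [abs_mul, abs_mul]; ring
        _ ≤ |γ| * |x k - y k| * 1 :=
            mul_le_mul_of_nonneg_left (hf k σ) (mul_nonneg (abs_nonneg _) (abs_nonneg _))
        _ = |γ| * |x k - y k| := mul_one _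
    calc κ σ * (Real.exp (γ * ∑ a, y a * f a σ) * Real.exp (γ * ((x k - y k) * f k σ)))
        ≤ κ σ * (Real.exp (γ * ∑ a, y a * f a σ) * Real.exp (|γ| * |x k - y k|)) := by
          apply mul_le_mul_of_nonneg_left _ (hκ0 σ)
          exact mul_le_mul_of_nonneg_left h2 (Real.exp_pos _).le
      _ = Real.exp (|γ| * |x k - y k|) * (κ σ * Real.exp (γ * ∑ a, y a * f a σ)) := by ring
  calc Real.log (Zf κ (fun σ => ∑ a, x a * f a σ) γ)
      ≤ Real.log (Real.exp (|γ| * |x k - y k|) * Zf κ (fun σ => ∑ a, y a * f a σ) γ) :=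
        Real.log_le_log (Zf_pos κ _ hκ0 hκ1 γ) hZle
    _ = Real.log (Zf κ (fun σ => ∑ a, y a * f a σ) γ) + |γ| * |x k - y k| := by
        rw [Real.log_mul (Real.exp_pos _).ne' (Zf_pos κ _ hκ0 hκ1 γ).ne', Real.log_exp]
        ring

lemma logZf_lip {τ α : Type*} [Fintype τ] [Nonempty τ] [Fintype α] [DecidableEq α]
    (κ : τ → ℝ) (hκ0 : ∀ σ, 0 ≤ κ σ) (hκ1 : ∑ σ, κ σ = 1) (f : α → τ → ℝ)
    (hf : ∀ a σ, |f a σ| ≤ 1) (γ : ℝ) (k : α) (x y : α → ℝ) (hxy : ∀ j, j ≠ k → x j = y j) :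
    |Real.log (Zf κ (fun σ => ∑ a, x a * f a σ) γ)
      - Real.log (Zf κ (fun σ => ∑ a, y a * f a σ) γ)| ≤ |γ| * |x k - y k| := by
  rw [abs_sub_le_iff]
  constructor
  · have := logZf_lip_side κ hκ0 hκ1 f hf γ k x y hxy
    linarith
  · have := logZf_lip_side κ hκ0 hκ1 f hf γ k y x (fun j hj => (hxy j hj).symm)
    rw [abs_sub_comm (y k) (x k)] at this
    linarith

lemma integrable_eval_pi {ι : Type*} [Fintype ι] {h : ℝ → ℝ}
    (hh : AEStronglyMeasurable h (gaussianReal 0 1)) (hi : Integrable h (gaussianReal 0 1))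
    (c : ι) : Integrable (fun p : ι → ℝ => h (p c)) (Measure.pi fun _ => gaussianReal 0 1) :=
  ((mp_eval_pi _ c).integrable_comp hh).2 hi

lemma integral_eval_pi {ι : Type*} [Fintype ι] {h : ℝ → ℝ}
    (hh : AEStronglyMeasurable h (gaussianReal 0 1)) (c : ι) :
    ∫ p : ι → ℝ, h (p c) ∂(Measure.pi fun _ => gaussianReal 0 1) = ∫ x, h x ∂(gaussianReal 0 1) :=
  integral_comp_mp (mp_eval_pi _ c) hh

lemma sq_integral_abs_sub_le {X : Type*} [MeasurableSpace X] (μ : Measure X)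
    [IsProbabilityMeasure μ] (F : X → ℝ) (hFi : Integrable F μ)
    (hF2i : Integrable (fun a => (F a) ^ 2) μ) :
    (∫ a, |F a - ∫ b, F b ∂μ| ∂μ) ^ 2 ≤ ∫ a, (F a) ^ 2 ∂μ - (∫ a, F a ∂μ) ^ 2 := by
  set m := ∫ a, F a ∂μ with hm
  set t := ∫ a, |F a - m| ∂μ with ht
  have hGi : Integrable (fun a => |F a - m|) μ := (hFi.sub (integrable_const m)).abs
  have hG2i : Integrable (fun a => (F a - m) ^ 2) μ := by
    have heq : (fun a => (F a - m) ^ 2) = fun a => (F a) ^ 2 - 2 * m * F a + m ^ 2 :=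
      funext fun a => by ring
    rw [heq]
    exact (hF2i.sub (hFi.const_mul (2 * m))).add (integrable_const _)
  have key : 0 ≤ ∫ a, (|F a - m| - t) ^ 2 ∂μ := integral_nonneg fun a => sq_nonneg _
  have expand1 : ∫ a, (|F a - m| - t) ^ 2 ∂μ = ∫ a, (F a - m) ^ 2 ∂μ - t ^ 2 := by
    have heq : (fun a => (|F a - m| - t) ^ 2)
        = fun a => (F a - m) ^ 2 - 2 * t * |F a - m| + t ^ 2 := funext fun a => by
      have : |F a - m| ^ 2 = (F a - m) ^ 2 := sq_abs _
      nlinarith [this]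
    have hsub : Integrable (fun a => (F a - m) ^ 2 - 2 * t * |F a - m|) μ :=
      hG2i.sub (hGi.const_mul (2 * t))
    rw [heq, integral_add hsub (integrable_const _),
      integral_sub hG2i (hGi.const_mul (2 * t)), integral_const_mul, integral_const]
    simp [← ht]
    ring
  have expand2 : ∫ a, (F a - m) ^ 2 ∂μ = ∫ a, (F a) ^ 2 ∂μ - m ^ 2 := by
    have heq : (fun a => (F a - m) ^ 2) = fun a => (F a) ^ 2 - 2 * m * F a + m ^ 2 :=
      funext fun a => by ring
    have hsub : Integrable (fun a => (F a) ^ 2 - 2 * m * F a) μ :=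
      hF2i.sub (hFi.const_mul (2 * m))
    rw [heq, integral_add hsub (integrable_const _),
      integral_sub hF2i (hFi.const_mul (2 * m)), integral_const_mul, integral_const]
    simp [← hm]
    ring
  rw [expand1, expand2] at key
  linarith

lemma efron_stein {n : ℕ} (F : (Fin n → ℝ) → ℝ) (hFm : Measurable F) (L B : ℝ)
    (hL : 0 ≤ L) (hB : 0 ≤ B)
    (hLip : ∀ (k : Fin n) (x y : Fin n → ℝ), (∀ j, j ≠ k → x j = y j)
      → |F x - F y| ≤ L * |x k - y k|)
    (hgrow : ∀ x, |F x| ≤ B + L * ∑ i, |x i|) :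
    (∫ x, |F x - ∫ y, F y ∂(Measure.pi fun _ : Fin n => gaussianReal 0 1)|
        ∂(Measure.pi fun _ : Fin n => gaussianReal 0 1)) ^ 2 ≤ 2 * c2 * n * L ^ 2 := by
  classical
  set μ0 := gaussianReal 0 1 with hμ0
  set π : Measure (Fin n → ℝ) := Measure.pi fun _ : Fin n => μ0 with hπ
  set P : Measure ((Fin n ⊕ Fin n) → ℝ) := Measure.pi fun _ : Fin n ⊕ Fin n => μ0 with hP
  -- integrability of F and F^2 over π
  have habs_m : Measurable (fun x : ℝ => |x|) := measurable_id.abs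
  have hsq_m : Measurable (fun x : ℝ => x ^ 2) := by fun_prop
  have hS1π : Integrable (fun x : Fin n → ℝ => ∑ i, |x i|) π :=
    integrable_finset_sum _ fun i _ =>
      integrable_eval_pi habs_m.aestronglyMeasurable gg_int_abs i
  have hS2π : Integrable (fun x : Fin n → ℝ => ∑ i, (x i) ^ 2) π :=
    integrable_finset_sum _ fun i _ =>
      integrable_eval_pi hsq_m.aestronglyMeasurable gg_int_sq i
  have hsum_sq : ∀ (x : Fin n → ℝ), (∑ i, |x i|) ^ 2 ≤ (n : ℝ) * ∑ i, (x i) ^ 2 := by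
    intro x
    have := Finset.sum_mul_sq_le_sq_mul_sq Finset.univ (fun _ : Fin n => (1 : ℝ))
      (fun i => |x i|)
    simp only [one_mul, one_pow, sq_abs] at this
    simpa [Finset.card_univ] using this
  have hsum_nonneg : ∀ (x : Fin n → ℝ), 0 ≤ ∑ i, |x i| :=
    fun x => Finset.sum_nonneg fun i _ => abs_nonneg _
  have hFi : Integrable F π := by
    refine Integrable.mono' ((integrable_const B).add (hS1π.const_mul L))
      hFm.aestronglyMeasurable ?_
    filter_upwards with x
    rw [Real.norm_eq_abs]
    exact hgrow x
  have hF2i : Integrable (fun x => (F x) ^ 2) π := by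
    refine Integrable.mono' (((integrable_const (B ^ 2)).add
      ((hS1π.const_mul (2 * B * L)))).add ((hS2π.const_mul (L ^ 2 * n))))
      (hFm.pow_const 2).aestronglyMeasurable ?_
    filter_upwards with x
    rw [Real.norm_eq_abs, abs_of_nonneg (sq_nonneg _)]
    simp only [Pi.add_apply]
    have h1 := hgrow x
    have h2 := hsum_sq x
    have h3 := hsum_nonneg x
    have h4 : (F x) ^ 2 ≤ (B + L * ∑ i, |x i|) ^ 2 := by
      rw [← sq_abs (F x)]
      exact pow_le_pow_left₀ (abs_nonneg _) h1 2
    nlinarith [sq_nonneg (∑ i, |x i|), mul_nonneg hL h3, mul_nonneg hB (mul_nonneg hL h3)]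
  -- the doubled space
  set cmap : ℕ → Fin n → Fin n ⊕ Fin n :=
    fun m i => if (i : ℕ) < m then Sum.inr i else Sum.inl i with hcmap
  set X : ((Fin n ⊕ Fin n) → ℝ) → Fin n → ℝ := fun p i => p (Sum.inl i) with hX
  set Y : ((Fin n ⊕ Fin n) → ℝ) → Fin n → ℝ := fun p i => p (Sum.inr i) with hY
  set ζ : ℕ → ((Fin n ⊕ Fin n) → ℝ) → Fin n → ℝ := fun m p i => p (cmap m i) with hζ
  have hζ0 : ζ 0 = X := by
    funext p i; simp [hζ, hcmap, hX]
  have hζn : ζ n = Y := by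
    funext p i; simp [hζ, hcmap, hY, i.isLt]
  have hcmap_inj : ∀ m, Function.Injective (cmap m) := by
    intro m i j h
    by_cases hi : (i : ℕ) < m <;> by_cases hj : (j : ℕ) < m <;>
      simp [hcmap, hi, hj] at h <;> exact h
  have hXmp : MeasurePreserving X P π := map_reindex_pi μ0 Sum.inl Sum.inl_injective
  have hYmp : MeasurePreserving Y P π := map_reindex_pi μ0 Sum.inr Sum.inr_injective
  have hζmp : ∀ m, MeasurePreserving (ζ m) P π := fun m =>
    map_reindex_pi μ0 (cmap m) (hcmap_inj m)
  -- good coordinate-valued maps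
  set Good : (((Fin n ⊕ Fin n) → ℝ) → Fin n → ℝ) → Prop :=
    fun u => ∃ v : Fin n → Fin n ⊕ Fin n,
      (∀ i, v i = Sum.inl i ∨ v i = Sum.inr i) ∧ u = fun p i => p (v i) with hGood
  have hGoodX : Good X := ⟨Sum.inl, fun i => Or.inl rfl, rfl⟩
  have hGoodY : Good Y := ⟨Sum.inr, fun i => Or.inr rfl, rfl⟩
  have hGoodζ : ∀ m, Good (ζ m) := by
    intro m
    refine ⟨cmap m, fun i => ?_, rfl⟩
    by_cases h : (i : ℕ) < m
    · exact Or.inr (by simp [hcmap, h])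
    · exact Or.inl (by simp [hcmap, h])
  have hGood_meas : ∀ u, Good u → Measurable u := by
    rintro u ⟨v, -, rfl⟩
    exact measurable_pi_lambda _ fun i => measurable_pi_apply _
  have hGood_bound : ∀ u, Good u → ∀ p, |F (u p)| ≤ B + L * ∑ c, |p c| := by
    rintro u ⟨v, hv, rfl⟩ p
    refine (hgrow _).trans ?_
    have h1 : ∑ i, |p (v i)| ≤ ∑ c, |p c| := by
      rw [Fintype.sum_sum_type]
      calc ∑ i, |p (v i)| ≤ ∑ i, (|p (Sum.inl i)| + |p (Sum.inr i)|) := by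
            apply Finset.sum_le_sum
            intro i _
            rcases hv i with h | h <;> rw [h]
            · exact le_add_of_nonneg_right (abs_nonneg _)
            · exact le_add_of_nonneg_left (abs_nonneg _)
        _ = _ := Finset.sum_add_distrib
    have := mul_le_mul_of_nonneg_left h1 hL
    linarith
  -- integrability on P
  have hS1P : Integrable (fun p : (Fin n ⊕ Fin n) → ℝ => ∑ c, |p c|) P :=
    integrable_finset_sum _ fun c _ =>
      integrable_eval_pi habs_m.aestronglyMeasurable gg_int_abs c
  have hS2P : Integrable (fun p : (Fin n ⊕ Fin n) → ℝ => ∑ c, (p c) ^ 2) P :=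
    integrable_finset_sum _ fun c _ =>
      integrable_eval_pi hsq_m.aestronglyMeasurable gg_int_sq c
  have hsum_sqP : ∀ (p : (Fin n ⊕ Fin n) → ℝ),
      (∑ c, |p c|) ^ 2 ≤ (2 * n : ℝ) * ∑ c, (p c) ^ 2 := by
    intro p
    have := Finset.sum_mul_sq_le_sq_mul_sq Finset.univ (fun _ : Fin n ⊕ Fin n => (1 : ℝ))
      (fun c => |p c|)
    simp only [one_mul, one_pow, sq_abs] at this
    have hcard : (Finset.univ (α := Fin n ⊕ Fin n)).card = 2 * n := by
      simp [Finset.card_univ, Fintype.card_sum, two_mul]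
    calc (∑ c, |p c|) ^ 2 ≤ (∑ _c : Fin n ⊕ Fin n, (1:ℝ)) * ∑ c, (p c) ^ 2 := this
      _ = (2 * n : ℝ) * ∑ c, (p c) ^ 2 := by
          rw [Finset.sum_const, hcard, nsmul_eq_mul]; push_cast; ring
  have hprodint : ∀ u v, Good u → Good v →
      Integrable (fun p => F (u p) * F (v p)) P := by
    intro u v hu hv
    refine Integrable.mono' (((integrable_const (B ^ 2)).add
      ((hS1P.const_mul (2 * B * L)))).add ((hS2P.const_mul (L ^ 2 * (2 * n))))) ?_ ?_
    · exact ((hFm.comp (hGood_meas u hu)).mul (hFm.comp (hGood_meas v hv))).aestronglyMeasurable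
    · filter_upwards with p
      rw [Real.norm_eq_abs, abs_mul]
      simp only [Pi.add_apply]
      have h1 := hGood_bound u hu p
      have h2 := hGood_bound v hv p
      have h3 : 0 ≤ ∑ c, |p c| := Finset.sum_nonneg fun c _ => abs_nonneg _
      have h4 : |F (u p)| * |F (v p)| ≤ (B + L * ∑ c, |p c|) ^ 2 := by
        have := mul_le_mul h1 h2 (abs_nonneg _) (by positivity)
        nlinarith
      have h5 := hsum_sqP p
      nlinarith [mul_nonneg hL h3, mul_nonneg hB (mul_nonneg hL h3), sq_nonneg L]
  -- telescoping
  set φfun : ℕ → ℝ := fun m => ∫ p, F (X p) * F (ζ m p) ∂P with hφfun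
  have hstep : ∀ m ∈ Finset.range n, φfun m - φfun (m + 1) ≤ 2 * c2 * L ^ 2 := by
    intro m hm
    set k : Fin n := ⟨m, Finset.mem_range.1 hm⟩ with hk
    have hkm : (k : ℕ) = m := rfl
    set sw : ((Fin n ⊕ Fin n) → ℝ) → ((Fin n ⊕ Fin n) → ℝ) :=
      fun p c => p (Equiv.swap (Sum.inl k) (Sum.inr k) c) with hsw
    have hswmp : MeasurePreserving sw P P :=
      map_reindex_pi μ0 _ (Equiv.swap (Sum.inl k) (Sum.inr k)).injective
    have hidx : ∀ i, Equiv.swap (Sum.inl k) (Sum.inr k) (cmap m i) = cmap (m + 1) i := by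
      intro i
      rcases lt_trichotomy (i : ℕ) m with h | h | h
      · have hik : i ≠ k := by
          intro hik; rw [hik, hkm] at h; exact lt_irrefl _ h
        rw [show cmap m i = Sum.inr i by simp [hcmap, h],
          show cmap (m+1) i = Sum.inr i by simp [hcmap, Nat.lt_succ_of_lt h]]
        apply Equiv.swap_apply_of_ne_of_ne
        · simp
        · simp [hik]
      · have hik : i = k := Fin.ext (by rw [hkm]; exact h)
        rw [show cmap m i = Sum.inl i by simp [hcmap, h],
          show cmap (m+1) i = Sum.inr i by simp [hcmap, h, Nat.lt_succ_self]]
        rw [hik]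
        exact Equiv.swap_apply_left _ _
      · have hik : i ≠ k := by
          intro hik; rw [hik, hkm] at h; exact lt_irrefl _ h
        rw [show cmap m i = Sum.inl i by simp [hcmap, not_lt_of_gt h],
          show cmap (m+1) i = Sum.inl i by simp [hcmap, Nat.lt_succ_iff, not_le_of_gt h]]
        apply Equiv.swap_apply_of_ne_of_ne
        · simp [hik]
        · simp
    have hsw_ζ1 : ∀ p, ζ m (sw p) = ζ (m + 1) p := by
      intro p; funext i
      show p (Equiv.swap (Sum.inl k) (Sum.inr k) (cmap m i)) = p (cmap (m+1) i)
      rw [hidx i]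
    have hsw_ζ2 : ∀ p, ζ (m + 1) (sw p) = ζ m p := by
      intro p; funext i
      show p (Equiv.swap (Sum.inl k) (Sum.inr k) (cmap (m+1) i)) = p (cmap m i)
      rw [← hidx i, Equiv.swap_apply_self]
    have hGoodXsw : Good (fun p => X (sw p)) := by
      refine ⟨fun i => Equiv.swap (Sum.inl k) (Sum.inr k) (Sum.inl i), fun i => ?_, rfl⟩
      beta_reduce
      by_cases h : i = k
      · subst h; rw [Equiv.swap_apply_left]; exact Or.inr rfl
      · rw [Equiv.swap_apply_of_ne_of_ne (by simp [h]) (by simp)]; exact Or.inl rfl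
    -- pointwise Lipschitz bounds
    have hd1 : ∀ p, |F (X p) - F (X (sw p))|
        ≤ L * |p (Sum.inl k) - p (Sum.inr k)| := by
      intro p
      have hagree : ∀ j, j ≠ k → X p j = X (sw p) j := by
        intro j hj
        show p (Sum.inl j) = p (Equiv.swap (Sum.inl k) (Sum.inr k) (Sum.inl j))
        rw [Equiv.swap_apply_of_ne_of_ne (by simp [hj]) (by simp)]
      have h1 := hLip k (X p) (X (sw p)) hagree
      have h2 : X p k = p (Sum.inl k) := rfl
      have h3 : X (sw p) k = p (Sum.inr k) := by
        show p (Equiv.swap (Sum.inl k) (Sum.inr k) (Sum.inl k)) = _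
        rw [Equiv.swap_apply_left]
      rw [h2, h3] at h1
      exact h1
    have hd2 : ∀ p, |F (ζ m p) - F (ζ (m + 1) p)|
        ≤ L * |p (Sum.inl k) - p (Sum.inr k)| := by
      intro p
      have hagree : ∀ j, j ≠ k → ζ m p j = ζ (m + 1) p j := by
        intro j hj
        show p (cmap m j) = p (cmap (m+1) j)
        have : (j : ℕ) < m ↔ (j : ℕ) < m + 1 := by
          constructor
          · exact fun h => Nat.lt_succ_of_lt h
          · intro h
            rcases Nat.lt_succ_iff_lt_or_eq.1 h with h | h
            · exact h
            · exact absurd (Fin.ext (by rw [hkm]; exact h) : j = k) hj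
        by_cases h : (j : ℕ) < m
        · simp [hcmap, h, this.1 h]
        · have h2 : ¬ (j : ℕ) < m + 1 := fun hh => h (this.2 hh)
          simp [hcmap, h, h2]
      have h1 := hLip k (ζ m p) (ζ (m + 1) p) hagree
      have h2 : ζ m p k = p (Sum.inl k) := by
        show p (cmap m k) = _
        simp [hcmap, hkm]
      have h3 : ζ (m + 1) p k = p (Sum.inr k) := by
        show p (cmap (m+1) k) = _
        simp [hcmap, hkm, Nat.lt_succ_self]
      rw [h2, h3] at h1
      exact h1
    -- swap identity
    have hint1 : Integrable (fun p => F (X p) * (F (ζ m p) - F (ζ (m + 1) p))) P := by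
      have := (hprodint X (ζ m) hGoodX (hGoodζ m)).sub
        (hprodint X (ζ (m+1)) hGoodX (hGoodζ (m+1)))
      refine this.congr (Filter.Eventually.of_forall fun p => ?_)
      simp only [Pi.sub_apply]
      ring
    have hint2 : Integrable (fun p => F (X (sw p)) * (F (ζ m p) - F (ζ (m + 1) p))) P := by
      have := (hprodint _ (ζ m) hGoodXsw (hGoodζ m)).sub
        (hprodint _ (ζ (m+1)) hGoodXsw (hGoodζ (m+1)))
      refine this.congr (Filter.Eventually.of_forall fun p => ?_)
      simp only [Pi.sub_apply]
      ring
    have h1 : φfun m - φfun (m + 1)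
        = ∫ p, F (X p) * (F (ζ m p) - F (ζ (m + 1) p)) ∂P := by
      rw [hφfun]
      rw [← integral_sub (hprodint X (ζ m) hGoodX (hGoodζ m))
        (hprodint X (ζ (m+1)) hGoodX (hGoodζ (m+1)))]
      congr 1; funext p; ring
    have h2 : φfun m - φfun (m + 1)
        = -∫ p, F (X (sw p)) * (F (ζ m p) - F (ζ (m + 1) p)) ∂P := by
      rw [h1]
      have hGasm : AEStronglyMeasurable
          (fun q => F (X q) * (F (ζ m q) - F (ζ (m + 1) q))) P :=
        hint1.aestronglyMeasurable
      have hcomp := integral_comp_mp hswmp hGasm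
      rw [← hcomp]
      rw [← integral_neg]
      congr 1; funext p
      rw [hsw_ζ1 p, hsw_ζ2 p]
      ring
    have h3 : 2 * (φfun m - φfun (m + 1))
        = ∫ p, (F (X p) - F (X (sw p))) * (F (ζ m p) - F (ζ (m + 1) p)) ∂P := by
      have := integral_sub hint1 hint2
      rw [show (2 : ℝ) * (φfun m - φfun (m+1))
        = (φfun m - φfun (m+1)) - -(φfun m - φfun (m+1)) by ring]
      nth_rewrite 1 [h1]
      nth_rewrite 1 [h2]
      rw [neg_neg, ← this]
      congr 1; funext p; ring
    -- quadratic bound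
    have hdint : Integrable (fun p => (p (Sum.inl k) - p (Sum.inr k)) ^ 2) P := by
      refine Integrable.mono' (((integrable_eval_pi hsq_m.aestronglyMeasurable gg_int_sq
        (Sum.inl k)).const_mul 2).add ((integrable_eval_pi hsq_m.aestronglyMeasurable
          gg_int_sq (Sum.inr k)).const_mul 2)) ?_ ?_
      · apply Measurable.aestronglyMeasurable
        exact ((measurable_pi_apply (Sum.inl k)).sub (measurable_pi_apply (Sum.inr k))).pow_const 2
      · filter_upwards with p
        rw [Real.norm_eq_abs, abs_of_nonneg (sq_nonneg _)]
        simp only [Pi.add_apply]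
        nlinarith [sq_nonneg (p (Sum.inl k) + p (Sum.inr k))]
    have hfint : Integrable
        (fun p => (F (X p) - F (X (sw p))) * (F (ζ m p) - F (ζ (m + 1) p))) P := by
      refine ((hint1.sub hint2).congr (Filter.Eventually.of_forall fun p => ?_))
      simp only [Pi.sub_apply]
      ring
    have h4 : ∫ p, (F (X p) - F (X (sw p))) * (F (ζ m p) - F (ζ (m + 1) p)) ∂P
        ≤ ∫ p, L ^ 2 * (p (Sum.inl k) - p (Sum.inr k)) ^ 2 ∂P := by
      apply integral_mono hfint (hdint.const_mul (L ^ 2))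
      intro p
      calc (F (X p) - F (X (sw p))) * (F (ζ m p) - F (ζ (m + 1) p))
          ≤ |(F (X p) - F (X (sw p))) * (F (ζ m p) - F (ζ (m + 1) p))| := le_abs_self _
        _ = |F (X p) - F (X (sw p))| * |F (ζ m p) - F (ζ (m + 1) p)| := abs_mul _ _
        _ ≤ (L * |p (Sum.inl k) - p (Sum.inr k)|) * (L * |p (Sum.inl k) - p (Sum.inr k)|) :=
            mul_le_mul (hd1 p) (hd2 p) (abs_nonneg _) (mul_nonneg hL (abs_nonneg _))
        _ = L ^ 2 * (p (Sum.inl k) - p (Sum.inr k)) ^ 2 := by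
            rw [← sq_abs (p (Sum.inl k) - p (Sum.inr k))]; ring
    have h5 : ∫ p, L ^ 2 * (p (Sum.inl k) - p (Sum.inr k)) ^ 2 ∂P ≤ L ^ 2 * (4 * c2) := by
      rw [integral_const_mul]
      apply mul_le_mul_of_nonneg_left _ (sq_nonneg L)
      have hsum2int : Integrable
          (fun p => 2 * (p (Sum.inl k)) ^ 2 + 2 * (p (Sum.inr k)) ^ 2) P :=
        ((integrable_eval_pi hsq_m.aestronglyMeasurable gg_int_sq
          (Sum.inl k)).const_mul 2).add ((integrable_eval_pi hsq_m.aestronglyMeasurable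
            gg_int_sq (Sum.inr k)).const_mul 2)
      calc ∫ p, (p (Sum.inl k) - p (Sum.inr k)) ^ 2 ∂P
          ≤ ∫ p, (2 * (p (Sum.inl k)) ^ 2 + 2 * (p (Sum.inr k)) ^ 2) ∂P := by
            apply integral_mono hdint hsum2int
            intro p
            show (p (Sum.inl k) - p (Sum.inr k)) ^ 2
              ≤ 2 * (p (Sum.inl k)) ^ 2 + 2 * (p (Sum.inr k)) ^ 2
            nlinarith [sq_nonneg (p (Sum.inl k) + p (Sum.inr k))]
        _ = 2 * (∫ p, (p (Sum.inl k)) ^ 2 ∂P) + 2 * (∫ p, (p (Sum.inr k)) ^ 2 ∂P) := by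
            rw [integral_add (((integrable_eval_pi hsq_m.aestronglyMeasurable gg_int_sq
              (Sum.inl k)).const_mul 2)) (((integrable_eval_pi hsq_m.aestronglyMeasurable
              gg_int_sq (Sum.inr k)).const_mul 2)), integral_const_mul, integral_const_mul]
        _ = 4 * c2 := by
            have e1 : ∫ p : (Fin n ⊕ Fin n) → ℝ, (p (Sum.inl k)) ^ 2 ∂P = c2 :=
              integral_eval_pi hsq_m.aestronglyMeasurable (Sum.inl k)
            have e2 : ∫ p : (Fin n ⊕ Fin n) → ℝ, (p (Sum.inr k)) ^ 2 ∂P = c2 :=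
              integral_eval_pi hsq_m.aestronglyMeasurable (Sum.inr k)
            rw [e1, e2]; ring
    linarith [h3 ▸ le_trans h4 h5]
  -- assemble
  have htel : φfun 0 - φfun n = ∑ m ∈ Finset.range n, (φfun m - φfun (m + 1)) :=
    (Finset.sum_range_sub' φfun n).symm
  have hsum : φfun 0 - φfun n ≤ (n : ℝ) * (2 * c2 * L ^ 2) := by
    rw [htel]
    calc ∑ m ∈ Finset.range n, (φfun m - φfun (m + 1))
        ≤ ∑ _m ∈ Finset.range n, (2 * c2 * L ^ 2) := Finset.sum_le_sum hstep
      _ = (n : ℝ) * (2 * c2 * L ^ 2) := by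
          rw [Finset.sum_const, Finset.card_range, nsmul_eq_mul]
  have hφ0 : φfun 0 = ∫ x, (F x) ^ 2 ∂π := by
    have h1 : φfun 0 = ∫ p, F (X p) * F (X p) ∂P := by
      simp only [hφfun, hζ0]
    rw [h1]
    calc ∫ p, F (X p) * F (X p) ∂P
        = ∫ x, F x * F x ∂π := integral_comp_mp hXmp (hFm.mul hFm).aestronglyMeasurable
      _ = ∫ x, (F x) ^ 2 ∂π := by congr 1; funext x; ring
  have hφn : φfun n = (∫ x, F x ∂π) ^ 2 := by
    have h1 : φfun n = ∫ p, F (X p) * F (Y p) ∂P := by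
      simp only [hφfun, hζn]
    rw [h1]
    have hmp := measurePreserving_sumPiEquivProdPi (fun _ : Fin n ⊕ Fin n => μ0)
    have hmp2 : MeasurePreserving (⇑(MeasurableEquiv.sumPiEquivProdPi
        (fun _ : Fin n ⊕ Fin n => ℝ))) P
        ((Measure.pi fun _ : Fin n => μ0).prod (Measure.pi fun _ : Fin n => μ0)) := by
      rw [hP]; exact hmp
    have h2 : ∫ p, F (X p) * F (Y p) ∂P
        = ∫ q : (Fin n → ℝ) × (Fin n → ℝ), F q.1 * F q.2
            ∂((Measure.pi fun _ : Fin n => μ0).prod (Measure.pi fun _ : Fin n => μ0)) :=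
      integral_comp_mp (h := fun q : (Fin n → ℝ) × (Fin n → ℝ) => F q.1 * F q.2) hmp2
        ((hFm.comp measurable_fst).mul (hFm.comp measurable_snd)).aestronglyMeasurable
    rw [h2, integral_prod_mul F F, ← hπ, sq]
  calc (∫ x, |F x - ∫ y, F y ∂π| ∂π) ^ 2
      ≤ ∫ x, (F x) ^ 2 ∂π - (∫ x, F x ∂π) ^ 2 := sq_integral_abs_sub_le π F hFi hF2i
    _ = φfun 0 - φfun n := by rw [hφ0, hφn]
    _ ≤ (n : ℝ) * (2 * c2 * L ^ 2) := hsum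
    _ = 2 * c2 * n * L ^ 2 := by ring

theorem gibbs_aux {Ω : Type*} [MeasureSpace Ω]
    [IsProbabilityMeasure (ℙ : Measure Ω)]
    (μ : (N : ℕ) → (Fin N → Bool) → ℝ)
    (hμ0 : ∀ N σ, 0 ≤ μ N σ) (hμ1 : ∀ N, ∑ σ, μ N σ = 1)
    (A : ℕ → ℕ) (C : ℝ) (hA : ∀ N, (A N : ℝ) ≤ C * N)
    (f : (N : ℕ) → Fin (A N) → (Fin N → Bool) → ℝ)
    (hf : ∀ N α σ, |f N α σ| ≤ 1)
    (g : (N : ℕ) → Fin (A N) → Ω → ℝ)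
    (hgm : ∀ N α, Measurable (g N α))
    (hglaw : ∀ N α, Measure.map (g N α) ℙ = gaussianReal 0 1)
    (hgindep : ∀ N, iIndepFun (β := fun _ : Fin (A N) => ℝ) (g N) ℙ)
    (γ₀ p' : ℝ) (p : ℝ → ℝ) (ε : ℝ) (hε : 0 < ε)
    (hp : ∀ γ ∈ Set.Ioo (γ₀ - ε) (γ₀ + ε),
      Tendsto (fun N : ℕ => ∫ ω, (1 / (N : ℝ)) *
          Real.log (∑ σ, μ N σ * Real.exp (γ * ∑ α, g N α ω * f N α σ)))
        atTop (𝓝 (p γ)))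
    (hd : HasDerivAt p p' γ₀) :
    Tendsto (fun N => ∫ ω, |(∑ σ, (μ N σ * Real.exp (γ₀ * ∑ α, g N α ω * f N α σ)) *
          ((1 / (N : ℝ)) * ∑ α, g N α ω * f N α σ)) /
          (∑ σ, μ N σ * Real.exp (γ₀ * ∑ α, g N α ω * f N α σ)) -
        ∫ ω', (∑ σ, (μ N σ * Real.exp (γ₀ * ∑ α, g N α ω' * f N α σ)) *
          ((1 / (N : ℝ)) * ∑ α, g N α ω' * f N α σ)) /
          (∑ σ, μ N σ * Real.exp (γ₀ * ∑ α, g N α ω' * f N α σ))|) atTop (𝓝 0) := by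
  classical
  have habs_m : Measurable (fun x : ℝ => |x|) := measurable_id.abs
  have hsq_m : Measurable (fun x : ℝ => x ^ 2) := by fun_prop
  -- basic objects
  set Sf : (N : ℕ) → Ω → (Fin N → Bool) → ℝ :=
    fun N ω σ => ∑ α, g N α ω * f N α σ with hSf
  set ψ : (N : ℕ) → ℝ → Ω → ℝ :=
    fun N γ ω => (1 / (N : ℝ)) * Real.log (Zf (μ N) (Sf N ω) γ) with hψ
  set aH : (N : ℕ) → Ω → ℝ :=
    fun N ω => (1 / (N : ℝ)) * Df (μ N) (Sf N ω) γ₀ with haH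
  set pN : ℕ → ℝ → ℝ := fun N γ => ∫ ω, ψ N γ ω with hpN
  set eN : ℕ → ℝ → ℝ := fun N γ => ∫ ω, |ψ N γ ω - pN N γ| with heN
  -- the target function equals ∫ |aH - ∫ aH|
  have htarget : ∀ N : ℕ, (∫ ω, |(∑ σ, (μ N σ * Real.exp (γ₀ * ∑ α, g N α ω * f N α σ)) *
          ((1 / (N : ℝ)) * ∑ α, g N α ω * f N α σ)) /
          (∑ σ, μ N σ * Real.exp (γ₀ * ∑ α, g N α ω * f N α σ)) -
        ∫ ω', (∑ σ, (μ N σ * Real.exp (γ₀ * ∑ α, g N α ω' * f N α σ)) *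
          ((1 / (N : ℝ)) * ∑ α, g N α ω' * f N α σ)) /
          (∑ σ, μ N σ * Real.exp (γ₀ * ∑ α, g N α ω' * f N α σ))|)
      = ∫ ω, |aH N ω - ∫ ω', aH N ω'| := by
    intro N
    have hae : ∀ ω, (∑ σ, (μ N σ * Real.exp (γ₀ * ∑ α, g N α ω * f N α σ)) *
          ((1 / (N : ℝ)) * ∑ α, g N α ω * f N α σ)) /
          (∑ σ, μ N σ * Real.exp (γ₀ * ∑ α, g N α ω * f N α σ)) = aH N ω := by
      intro ω
      have hnum : (∑ σ, (μ N σ * Real.exp (γ₀ * Sf N ω σ)) * ((1 / (N : ℝ)) * Sf N ω σ))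
          = (1 / (N : ℝ)) * ∑ σ, μ N σ * Sf N ω σ * Real.exp (γ₀ * Sf N ω σ) := by
        rw [Finset.mul_sum]
        apply Finset.sum_congr rfl
        intro σ _
        ring
      show (∑ σ, (μ N σ * Real.exp (γ₀ * Sf N ω σ)) * ((1 / (N : ℝ)) * Sf N ω σ)) /
          (Zf (μ N) (Sf N ω) γ₀) = (1 / (N : ℝ)) *
          ((∑ σ, μ N σ * Sf N ω σ * Real.exp (γ₀ * Sf N ω σ)) / Zf (μ N) (Sf N ω) γ₀)
      rw [hnum, mul_div_assoc]
    simp_rw [hae]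
  simp_rw [htarget]
  -- measurability and integrability infrastructure
  have hSfm : ∀ N σ, Measurable (fun ω => Sf N ω σ) := by
    intro N σ
    apply Finset.measurable_sum
    intro α _
    exact (hgm N α).mul_const _
  have hZm : ∀ N γ, Measurable (fun ω => Zf (μ N) (Sf N ω) γ) := by
    intro N γ
    apply Finset.measurable_sum
    intro σ _
    exact measurable_const.mul ((hSfm N σ).const_mul γ).exp
  have hψm : ∀ N γ, Measurable (ψ N γ) := fun N γ => ((hZm N γ).log).const_mul _
  have haHm : ∀ N, Measurable (aH N) := by
    intro N
    apply Measurable.const_mul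
    apply Measurable.div _ (hZm N γ₀)
    apply Finset.measurable_sum
    intro σ _
    exact (measurable_const.mul (hSfm N σ)).mul ((hSfm N σ).const_mul γ₀).exp
  have hgabs_int : ∀ N α, Integrable (fun ω => |g N α ω|) ℙ := by
    intro N α
    have h1 : Integrable (fun x : ℝ => |x|) (Measure.map (g N α) ℙ) := by
      rw [hglaw N α]; exact gg_int_abs
    exact (integrable_map_measure habs_m.aestronglyMeasurable
      (hgm N α).aemeasurable).1 h1
  have hMint : ∀ N, Integrable (fun ω => ∑ α, |g N α ω|) ℙ :=
    fun N => integrable_finset_sum _ fun α _ => hgabs_int N α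
  have hSfbound : ∀ N ω σ, |Sf N ω σ| ≤ ∑ α, |g N α ω| := by
    intro N ω σ
    refine (Finset.abs_sum_le_sum_abs _ _).trans ?_
    apply Finset.sum_le_sum
    intro α _
    rw [abs_mul]
    calc |g N α ω| * |f N α σ| ≤ |g N α ω| * 1 :=
        mul_le_mul_of_nonneg_left (hf N α σ) (abs_nonneg _)
      _ = |g N α ω| := mul_one _
  have hψbound : ∀ N γ ω, |ψ N γ ω| ≤ (1 / (N : ℝ)) * (|γ| * ∑ α, |g N α ω|) := by
    intro N γ ω
    rw [hψ]
    show |(1 / (N : ℝ)) * Real.log (Zf (μ N) (Sf N ω) γ)| ≤ _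
    rw [abs_mul, abs_of_nonneg (by positivity : (0:ℝ) ≤ 1 / (N : ℝ))]
    exact mul_le_mul_of_nonneg_left
      (logZf_abs_le (μ N) (Sf N ω) (hμ0 N) (hμ1 N) (hSfbound N ω) γ) (by positivity)
  have hψint : ∀ N γ, Integrable (ψ N γ) ℙ := by
    intro N γ
    refine Integrable.mono' (((hMint N).const_mul (|γ| / (N : ℝ)))) 
      (hψm N γ).aestronglyMeasurable ?_
    filter_upwards with ω
    rw [Real.norm_eq_abs]
    calc |ψ N γ ω| ≤ (1 / (N : ℝ)) * (|γ| * ∑ α, |g N α ω|) := hψbound N γ ω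
      _ = |γ| / (N : ℝ) * ∑ α, |g N α ω| := by ring
  have haHbound : ∀ N ω, |aH N ω| ≤ (1 / (N : ℝ)) * ∑ α, |g N α ω| := by
    intro N ω
    rw [haH]
    show |(1 / (N : ℝ)) * Df (μ N) (Sf N ω) γ₀| ≤ _
    rw [abs_mul, abs_of_nonneg (by positivity : (0:ℝ) ≤ 1 / (N : ℝ))]
    exact mul_le_mul_of_nonneg_left
      (Df_abs_le (μ N) (Sf N ω) (hμ0 N) (hμ1 N) (hSfbound N ω) γ₀) (by positivity)
  have haHint : ∀ N, Integrable (aH N) ℙ := by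
    intro N
    refine Integrable.mono' ((hMint N).const_mul (1 / (N : ℝ)))
      (haHm N).aestronglyMeasurable ?_
    filter_upwards with ω
    rw [Real.norm_eq_abs]
    exact haHbound N ω
  -- concentration of the free energy
  have heNsq : ∀ N : ℕ, 1 ≤ N → ∀ γ : ℝ, (eN N γ) ^ 2 ≤ 2 * c2 * C * γ ^ 2 / N := by
    intro N hN γ
    have hNpos : (0 : ℝ) < N := by exact_mod_cast hN
    set Ψ : (Fin (A N) → ℝ) → ℝ :=
      fun x => (1 / (N : ℝ)) * Real.log (Zf (μ N) (fun σ => ∑ α, x α * f N α σ) γ) with hΨ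
    have hΨm : Measurable Ψ := by
      apply Measurable.const_mul
      apply Measurable.log
      apply Finset.measurable_sum
      intro σ _
      refine measurable_const.mul (Measurable.exp (Measurable.const_mul ?_ γ))
      apply Finset.measurable_sum
      intro α _
      exact (measurable_pi_apply α).mul_const _
    have hmp := law_pi (g N) (hgm N) (hglaw N) (hgindep N)
    have hcomp : ∀ ω, ψ N γ ω = Ψ (fun α => g N α ω) := fun ω => rfl
    have hpNeq : pN N γ = ∫ x, Ψ x ∂(Measure.pi fun _ : Fin (A N) => gaussianReal 0 1) := by
      rw [hpN]
      exact integral_comp_mp hmp hΨm.aestronglyMeasurable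
    have heNeq : eN N γ = ∫ x, |Ψ x - ∫ y, Ψ y ∂(Measure.pi fun _ : Fin (A N)
        => gaussianReal 0 1)| ∂(Measure.pi fun _ : Fin (A N) => gaussianReal 0 1) := by
      rw [heN]
      show ∫ ω, |ψ N γ ω - pN N γ| = _
      rw [hpNeq]
      exact integral_comp_mp hmp
        ((hΨm.sub measurable_const).abs).aestronglyMeasurable
    set L : ℝ := |γ| / (N : ℝ) with hL
    have hLnn : 0 ≤ L := by positivity
    have hLip : ∀ (k : Fin (A N)) (x y : Fin (A N) → ℝ), (∀ j, j ≠ k → x j = y j)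
        → |Ψ x - Ψ y| ≤ L * |x k - y k| := by
      intro k x y hxy
      have h1 := logZf_lip (μ N) (hμ0 N) (hμ1 N) (f N) (hf N) γ k x y hxy
      rw [hΨ]
      show |(1 / (N : ℝ)) * Real.log (Zf (μ N) (fun σ => ∑ α, x α * f N α σ) γ)
        - (1 / (N : ℝ)) * Real.log (Zf (μ N) (fun σ => ∑ α, y α * f N α σ) γ)| ≤ _
      rw [← mul_sub, abs_mul, abs_of_nonneg (by positivity : (0:ℝ) ≤ 1 / (N : ℝ))]
      calc (1 / (N : ℝ)) * |Real.log (Zf (μ N) (fun σ => ∑ α, x α * f N α σ) γ)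
            - Real.log (Zf (μ N) (fun σ => ∑ α, y α * f N α σ) γ)|
          ≤ (1 / (N : ℝ)) * (|γ| * |x k - y k|) :=
            mul_le_mul_of_nonneg_left h1 (by positivity)
        _ = L * |x k - y k| := by rw [hL]; ring
    have hgrow : ∀ x, |Ψ x| ≤ 0 + L * ∑ α, |x α| := by
      intro x
      have hSb : ∀ σ, |∑ α, x α * f N α σ| ≤ ∑ α, |x α| := by
        intro σ
        refine (Finset.abs_sum_le_sum_abs _ _).trans ?_
        apply Finset.sum_le_sum
        intro α _
        rw [abs_mul]
        calc |x α| * |f N α σ| ≤ |x α| * 1 :=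
            mul_le_mul_of_nonneg_left (hf N α σ) (abs_nonneg _)
          _ = |x α| := mul_one _
      rw [hΨ]
      show |(1 / (N : ℝ)) * Real.log (Zf (μ N) (fun σ => ∑ α, x α * f N α σ) γ)| ≤ _
      rw [abs_mul, abs_of_nonneg (by positivity : (0:ℝ) ≤ 1 / (N : ℝ)), zero_add]
      calc (1 / (N : ℝ)) * |Real.log (Zf (μ N) (fun σ => ∑ α, x α * f N α σ) γ)|
          ≤ (1 / (N : ℝ)) * (|γ| * ∑ α, |x α|) := mul_le_mul_of_nonneg_left
            (logZf_abs_le (μ N) _ (hμ0 N) (hμ1 N) hSb γ) (by positivity)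
        _ = L * ∑ α, |x α| := by rw [hL]; ring
    have hes := efron_stein Ψ hΨm L 0 hLnn le_rfl hLip hgrow
    rw [heNeq]
    calc (∫ x, |Ψ x - ∫ y, Ψ y ∂(Measure.pi fun _ : Fin (A N) => gaussianReal 0 1)|
          ∂(Measure.pi fun _ : Fin (A N) => gaussianReal 0 1)) ^ 2
        ≤ 2 * c2 * (A N) * L ^ 2 := hes
      _ ≤ 2 * c2 * (C * N) * L ^ 2 := by
          apply mul_le_mul_of_nonneg_right _ (sq_nonneg L)
          apply mul_le_mul_of_nonneg_left (hA N)
          linarith [c2_nonneg]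
      _ = 2 * c2 * C * γ ^ 2 / N := by
          rw [hL, div_pow, sq_abs]
          field_simp
  have heN0 : ∀ γ : ℝ, Tendsto (fun N => eN N γ) atTop (𝓝 0) := by
    intro γ
    apply squeeze_zero' (Filter.Eventually.of_forall fun N =>
      integral_nonneg fun ω => abs_nonneg _)
      (g := fun N : ℕ => Real.sqrt (2 * c2 * C * γ ^ 2 / N))
    · filter_upwards [Filter.eventually_ge_atTop 1] with N hN
      have h1 := heNsq N hN γ
      have h2 : 0 ≤ eN N γ := integral_nonneg fun ω => abs_nonneg _
      exact Real.le_sqrt_of_sq_le h1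
    · have h1 : Tendsto (fun N : ℕ => 2 * c2 * C * γ ^ 2 / N) atTop (𝓝 0) :=
        tendsto_const_div_atTop_nhds_zero_nat _
      have h2 := (Real.continuous_sqrt.tendsto 0).comp h1
      simpa only [Function.comp_def, Real.sqrt_zero] using h2
    -- convergence of pN
  have hpNconv : ∀ γ ∈ Set.Ioo (γ₀ - ε) (γ₀ + ε),
      Tendsto (fun N => pN N γ) atTop (𝓝 (p γ)) := by
    intro γ hγ
    exact hp γ hγ
  -- sandwich inequalities
  have hsand : ∀ N : ℕ, ∀ δ : ℝ, 0 < δ → ∀ ω,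
      (ψ N γ₀ ω - ψ N (γ₀ - δ) ω) / δ ≤ aH N ω ∧
      aH N ω ≤ (ψ N (γ₀ + δ) ω - ψ N γ₀ ω) / δ := by
    intro N δ hδ ω
    have h1 := slope_lower (μ N) (Sf N ω) (hμ0 N) (hμ1 N) (γ₀ := γ₀) (δ := δ) hδ
    have h2 := slope_upper (μ N) (Sf N ω) (hμ0 N) (hμ1 N) (γ₀ := γ₀) (δ := δ) hδ
    have hinv : (0:ℝ) ≤ 1 / (N:ℝ) := by positivity
    constructor
    · show _ ≤ (1 / (N : ℝ)) * Df (μ N) (Sf N ω) γ₀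
      calc (ψ N γ₀ ω - ψ N (γ₀ - δ) ω) / δ
          = (1/(N:ℝ)) * ((Real.log (Zf (μ N) (Sf N ω) γ₀)
            - Real.log (Zf (μ N) (Sf N ω) (γ₀ - δ))) / δ) := by
            show ((1/(N:ℝ)) * _ - (1/(N:ℝ)) * _)/δ = _
            ring
        _ ≤ _ := mul_le_mul_of_nonneg_left h1 hinv
    · show (1 / (N : ℝ)) * Df (μ N) (Sf N ω) γ₀ ≤ _
      calc (1 / (N : ℝ)) * Df (μ N) (Sf N ω) γ₀
          ≤ (1/(N:ℝ)) * ((Real.log (Zf (μ N) (Sf N ω) (γ₀ + δ))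
            - Real.log (Zf (μ N) (Sf N ω) γ₀)) / δ) := mul_le_mul_of_nonneg_left h2 hinv
        _ = (ψ N (γ₀ + δ) ω - ψ N γ₀ ω) / δ := by
            show _ = ((1/(N:ℝ)) * _ - (1/(N:ℝ)) * _)/δ
            ring
  have habs3 : ∀ a x b cc : ℝ, a ≤ x → x ≤ b → |x - cc| ≤ |a - cc| + |b - cc| := by
    intro a x b cc h1 h2
    rw [abs_le]
    constructor
    · have h3 := neg_abs_le (a - cc)
      have h4 := abs_nonneg (b - cc)
      linarith
    · have h3 := le_abs_self (b - cc)
      have h4 := abs_nonneg (a - cc)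
      linarith
  -- final limit
  rw [NormedAddCommGroup.tendsto_nhds_zero]
  intro η hη
  have hslope := hasDerivAt_iff_tendsto_slope.1 hd
  have hev : ∀ᶠ z in 𝓝[≠] γ₀, |slope p γ₀ z - p'| < η / 16 := by
    have h1 := Metric.tendsto_nhds.mp hslope (η/16) (by positivity)
    simpa [Real.dist_eq] using h1
  rw [eventually_nhdsWithin_iff, Metric.eventually_nhds_iff] at hev
  obtain ⟨r, hr, hball⟩ := hev
  set δ : ℝ := min (r/2) (ε/2) with hδdef
  have hδpos : 0 < δ := lt_min (by linarith) (by linarith)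
  have hδr : δ < r := lt_of_le_of_lt (min_le_left _ _) (by linarith)
  have hδε : δ < ε := lt_of_le_of_lt (min_le_right _ _) (by linarith)
  have hmem1 : γ₀ + δ ∈ Set.Ioo (γ₀ - ε) (γ₀ + ε) := ⟨by linarith, by linarith⟩
  have hmem2 : γ₀ ∈ Set.Ioo (γ₀ - ε) (γ₀ + ε) := ⟨by linarith, by linarith⟩
  have hmem3 : γ₀ - δ ∈ Set.Ioo (γ₀ - ε) (γ₀ + ε) := ⟨by linarith, by linarith⟩
  have hq1 : |(p (γ₀ + δ) - p γ₀) / δ - p'| < η / 16 := by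
    have h1 := hball (y := γ₀ + δ)
      (by rw [Real.dist_eq]; rw [show γ₀ + δ - γ₀ = δ by ring, abs_of_pos hδpos]; exact hδr)
      (ne_of_gt (show γ₀ < γ₀ + δ by linarith))
    rw [slope_def_field, show γ₀ + δ - γ₀ = δ by ring] at h1
    exact h1
  have hq2 : |(p γ₀ - p (γ₀ - δ)) / δ - p'| < η / 16 := by
    have h1 := hball (y := γ₀ - δ)
      (by rw [Real.dist_eq]; rw [show γ₀ - δ - γ₀ = -δ by ring, abs_neg, abs_of_pos hδpos]
          exact hδr)
      (ne_of_lt (show γ₀ - δ < γ₀ by linarith))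
    rw [slope_def_field] at h1
    have heq : (p (γ₀ - δ) - p γ₀) / (γ₀ - δ - γ₀) = (p γ₀ - p (γ₀ - δ)) / δ := by
      rw [show γ₀ - δ - γ₀ = -δ by ring, div_neg, ← neg_div]
      ring_nf
    rw [heq] at h1
    exact h1
  set bseq : ℕ → ℝ := fun N => 2 * ((eN N (γ₀ + δ) + eN N γ₀) / δ
      + (eN N γ₀ + eN N (γ₀ - δ)) / δ
      + |(pN N (γ₀ + δ) - pN N γ₀) / δ - p'| + |(pN N γ₀ - pN N (γ₀ - δ)) / δ - p'|)
    with hbseq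
  have hbtend : Tendsto bseq atTop (𝓝 (2 * (((0:ℝ) + 0) / δ + ((0:ℝ) + 0) / δ
      + |(p (γ₀ + δ) - p γ₀) / δ - p'| + |(p γ₀ - p (γ₀ - δ)) / δ - p'|))) := by
    apply Tendsto.const_mul
    refine Tendsto.add (Tendsto.add (Tendsto.add ?_ ?_) ?_) ?_
    · exact ((heN0 _).add (heN0 _)).div_const δ
    · exact ((heN0 _).add (heN0 _)).div_const δ
    · exact ((((hpNconv _ hmem1).sub (hpNconv _ hmem2)).div_const δ).sub
        tendsto_const_nhds).abs
    · exact ((((hpNconv _ hmem2).sub (hpNconv _ hmem3)).div_const δ).sub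
        tendsto_const_nhds).abs
  have hlim_lt : 2 * (((0:ℝ) + 0) / δ + ((0:ℝ) + 0) / δ
      + |(p (γ₀ + δ) - p γ₀) / δ - p'| + |(p γ₀ - p (γ₀ - δ)) / δ - p'|) < η / 2 := by
    rw [show ((0:ℝ) + 0) / δ = 0 by ring]
    linarith
  have hev2 : ∀ᶠ N in atTop, bseq N < η / 2 := hbtend.eventually_lt_const hlim_lt
  have hTb : ∀ᶠ N in atTop, (∫ ω, |aH N ω - ∫ ω', aH N ω'|) ≤ bseq N := by
    filter_upwards with N
    have hsand' := hsand N δ hδpos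
    set q1 : ℝ := (pN N (γ₀ + δ) - pN N γ₀) / δ with hq1d
    set q2 : ℝ := (pN N γ₀ - pN N (γ₀ - δ)) / δ with hq2d
    set Q1 : Ω → ℝ := fun ω => (ψ N (γ₀ + δ) ω - ψ N γ₀ ω) / δ with hQ1
    set Q2 : Ω → ℝ := fun ω => (ψ N γ₀ ω - ψ N (γ₀ - δ) ω) / δ with hQ2
    have hQ1int : Integrable Q1 ℙ := ((hψint N _).sub (hψint N _)).div_const δ
    have hQ2int : Integrable Q2 ℙ := ((hψint N _).sub (hψint N _)).div_const δ
    have hint1 : Integrable (fun ω => |aH N ω - p'|) ℙ :=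
      ((haHint N).sub (integrable_const p')).abs
    have hQ1a : Integrable (fun ω => |Q1 ω - p'|) ℙ :=
      (hQ1int.sub (integrable_const p')).abs
    have hQ2a : Integrable (fun ω => |Q2 ω - p'|) ℙ :=
      (hQ2int.sub (integrable_const p')).abs
    have hstep1 : ∀ ω, |aH N ω - p'| ≤ |Q2 ω - p'| + |Q1 ω - p'| := fun ω =>
      habs3 _ _ _ _ (hsand' ω).1 (hsand' ω).2
    have hmean : |(∫ ω', aH N ω') - p'| ≤ ∫ ω, |aH N ω - p'| := by
      have h1 : (∫ ω', aH N ω') - p' = ∫ ω, (aH N ω - p') := by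
        rw [integral_sub (haHint N) (integrable_const _), integral_const]
        simp
      rw [h1]
      have h2 := norm_integral_le_integral_norm (μ := (ℙ : Measure Ω)) (fun ω => aH N ω - p')
      simpa [Real.norm_eq_abs] using h2
    have hQbound : ∀ (γa γb : ℝ),
        ∫ ω, |(ψ N γa ω - ψ N γb ω)/δ - (pN N γa - pN N γb)/δ|
          ≤ (eN N γa + eN N γb)/δ := by
      intro γa γb
      have hia : Integrable (fun ω => |ψ N γa ω - pN N γa|) ℙ :=
        ((hψint N γa).sub (integrable_const _)).abs
      have hib : Integrable (fun ω => |ψ N γb ω - pN N γb|) ℙ :=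
        ((hψint N γb).sub (integrable_const _)).abs
      have hiq : Integrable
          (fun ω => |(ψ N γa ω - ψ N γb ω)/δ - (pN N γa - pN N γb)/δ|) ℙ :=
        ((((hψint N γa).sub (hψint N γb)).div_const δ).sub (integrable_const _)).abs
      calc ∫ ω, |(ψ N γa ω - ψ N γb ω)/δ - (pN N γa - pN N γb)/δ|
          ≤ ∫ ω, (|ψ N γa ω - pN N γa| + |ψ N γb ω - pN N γb|)/δ := by
            apply integral_mono hiq ((hia.add hib).div_const δ)
            intro ω
            show |(ψ N γa ω - ψ N γb ω)/δ - (pN N γa - pN N γb)/δ|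
              ≤ (|ψ N γa ω - pN N γa| + |ψ N γb ω - pN N γb|)/δ
            rw [show (ψ N γa ω - ψ N γb ω)/δ - (pN N γa - pN N γb)/δ
              = ((ψ N γa ω - pN N γa) - (ψ N γb ω - pN N γb))/δ by ring,
              abs_div, abs_of_pos hδpos]
            exact (div_le_div_iff_of_pos_right hδpos).2 (abs_sub _ _)
        _ = (eN N γa + eN N γb)/δ := by
            rw [integral_div, integral_add hia hib]
    have hQ1f : ∫ ω, |Q1 ω - p'| ≤ (eN N (γ₀ + δ) + eN N γ₀)/δ + |q1 - p'| := by
      have hiq : Integrable (fun ω => |Q1 ω - q1|) ℙ :=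
        (hQ1int.sub (integrable_const _)).abs
      calc ∫ ω, |Q1 ω - p'|
          ≤ ∫ ω, (|Q1 ω - q1| + |q1 - p'|) := by
            apply integral_mono hQ1a (hiq.add (integrable_const _))
            intro ω
            exact abs_sub_le _ _ _
        _ = (∫ ω, |Q1 ω - q1|) + |q1 - p'| := by
            rw [integral_add hiq (integrable_const _), integral_const]
            simp
        _ ≤ (eN N (γ₀ + δ) + eN N γ₀)/δ + |q1 - p'| := by
            have := hQbound (γ₀ + δ) γ₀
            have hle : ∫ ω, |Q1 ω - q1| ≤ (eN N (γ₀ + δ) + eN N γ₀)/δ := this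
            linarith
    have hQ2f : ∫ ω, |Q2 ω - p'| ≤ (eN N γ₀ + eN N (γ₀ - δ))/δ + |q2 - p'| := by
      have hiq : Integrable (fun ω => |Q2 ω - q2|) ℙ :=
        (hQ2int.sub (integrable_const _)).abs
      calc ∫ ω, |Q2 ω - p'|
          ≤ ∫ ω, (|Q2 ω - q2| + |q2 - p'|) := by
            apply integral_mono hQ2a (hiq.add (integrable_const _))
            intro ω
            exact abs_sub_le _ _ _
        _ = (∫ ω, |Q2 ω - q2|) + |q2 - p'| := by
            rw [integral_add hiq (integrable_const _), integral_const]
            simp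
        _ ≤ (eN N γ₀ + eN N (γ₀ - δ))/δ + |q2 - p'| := by
            have := hQbound γ₀ (γ₀ - δ)
            have hle : ∫ ω, |Q2 ω - q2| ≤ (eN N γ₀ + eN N (γ₀ - δ))/δ := this
            linarith
    calc ∫ ω, |aH N ω - ∫ ω', aH N ω'|
        ≤ ∫ ω, (|aH N ω - p'| + |(∫ ω', aH N ω') - p'|) := by
          apply integral_mono (((haHint N).sub (integrable_const _)).abs)
            (hint1.add (integrable_const _))
          intro ω
          calc |aH N ω - ∫ ω', aH N ω'|
              ≤ |aH N ω - p'| + |p' - ∫ ω', aH N ω'| := abs_sub_le _ _ _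
            _ = |aH N ω - p'| + |(∫ ω', aH N ω') - p'| := by rw [abs_sub_comm p']
      _ = (∫ ω, |aH N ω - p'|) + |(∫ ω', aH N ω') - p'| := by
          rw [integral_add hint1 (integrable_const _), integral_const]
          simp
      _ ≤ (∫ ω, |aH N ω - p'|) + ∫ ω, |aH N ω - p'| := by linarith
      _ = 2 * ∫ ω, |aH N ω - p'| := by ring
      _ ≤ 2 * ∫ ω, (|Q2 ω - p'| + |Q1 ω - p'|) := by
          apply mul_le_mul_of_nonneg_left _ (by norm_num : (0:ℝ) ≤ 2)
          apply integral_mono hint1 (hQ2a.add hQ1a)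
          intro ω
          exact hstep1 ω
      _ = 2 * ((∫ ω, |Q2 ω - p'|) + ∫ ω, |Q1 ω - p'|) := by
          rw [integral_add hQ2a hQ1a]
      _ ≤ bseq N := by
          rw [hbseq]
          have h1 := hQ1f
          have h2 := hQ2f
          linarith
  filter_upwards [hev2, hTb] with N h1 h2
  rw [Real.norm_eq_abs, abs_of_nonneg (integral_nonneg fun ω => abs_nonneg _)]
  linarith

theorem gibbs_average_concentrates {Ω : Type*} [MeasureSpace Ω]
    [IsProbabilityMeasure (ℙ : Measure Ω)]
    (μ : (N : ℕ) → (Fin N → Bool) → ℝ)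
    (hμ0 : ∀ N σ, 0 ≤ μ N σ) (hμ1 : ∀ N, ∑ σ, μ N σ = 1)
    (A : ℕ → ℕ) (C : ℝ) (hA : ∀ N, (A N : ℝ) ≤ C * N)
    (f : (N : ℕ) → Fin (A N) → (Fin N → Bool) → ℝ)
    (hf : ∀ N α σ, |f N α σ| ≤ 1)
    (g : (N : ℕ) → Fin (A N) → Ω → ℝ)
    (hgm : ∀ N α, Measurable (g N α))
    (hglaw : ∀ N α, Measure.map (g N α) ℙ = gaussianReal 0 1)
    (hgindep : ∀ N, iIndepFun (β := fun _ : Fin (A N) => ℝ) (g N) ℙ)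
    (γ₀ p' : ℝ) (p : ℝ → ℝ) (ε : ℝ) (hε : 0 < ε)
    (hp : ∀ γ ∈ Set.Ioo (γ₀ - ε) (γ₀ + ε),
      Tendsto (fun N : ℕ => ∫ ω, (1 / (N : ℝ)) *
          Real.log (∑ σ, μ N σ * Real.exp (γ * ∑ α, g N α ω * f N α σ)))
        atTop (𝓝 (p γ)))
    (hd : HasDerivAt p p' γ₀) :
    let w : (N : ℕ) → Ω → (Fin N → Bool) → ℝ :=
      fun N ω σ => μ N σ * Real.exp (γ₀ * ∑ α, g N α ω * f N α σ)
    let avgH : (N : ℕ) → Ω → ℝ := fun N ω =>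
      (∑ σ, w N ω σ * ((1 / (N : ℝ)) * ∑ α, g N α ω * f N α σ)) / (∑ σ, w N ω σ)
    Tendsto (fun N => ∫ ω, |avgH N ω - ∫ ω', avgH N ω'|) atTop (𝓝 0) := by
  intro w avgH
  exact gibbs_aux μ hμ0 hμ1 A C hA f hf g hgm hglaw hgindep γ₀ p' p ε hε hp hd
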